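/- arXiv:2309.08125 — 2 statements merged into one kernel-verified Lean document; each statement's English description precedes it below -/
import Mathlib

section
/- For an arithmetic sequence a_i = a + d·i (i = 0,...,p-1) with gcd(a, d) = 1 and a ≥ 2, every integer greater than (⌊(a-2)/(p-1)⌋)·a + d(a-1) is representable as a nonnegative integer combination of a_0, ..., a_{p-1}. -/
/-- Roberts' theorem (representability direction): for the arithmetic sequence
`a, a+d, ..., a+(p-1)d` with `gcd(a,d) = 1` and `a ≥ 2`, every integer greater
than `⌊(a-2)/(p-1)⌋·a + d·(a-1)` is a nonnegative integer combination of the terms. -/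
theorem roberts_representable (a d p : ℕ) (ha : 2 ≤ a) (hp : 2 ≤ p)
    (hgcd : Nat.gcd a d = 1) :
    ∀ m : ℕ, ((a - 2) / (p - 1)) * a + d * (a - 1) < m →
      ∃ x : ℕ → ℕ, m = ∑ i ∈ Finset.range p, x i * (a + d * i) := by
  intro m hm
  set q : ℕ := (a - 2) / (p - 1) with hq
  -- get an inverse of d modulo a
  obtain ⟨u, -, hu⟩ := Nat.exists_mul_mod_eq_one_of_coprime
    (Nat.Coprime.symm (hgcd : Nat.Coprime a d)) (by omega)
  set s : ℕ := m * u % a with hs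
  have hsa : s < a := Nat.mod_lt _ (by omega)
  have h1 : d * u ≡ 1 [MOD a] := by
    unfold Nat.ModEq
    rw [hu, Nat.mod_eq_of_lt (by omega)]
  have h2 : s * d ≡ m [MOD a] := by
    calc s * d ≡ (m * u) * d [MOD a] := Nat.ModEq.mul_right d (Nat.mod_modEq _ _)
      _ = m * (d * u) := by ring
      _ ≡ m * 1 [MOD a] := Nat.ModEq.mul_left m h1
      _ = m := by ring
  have hsd2 : s * d ≤ d * (a - 1) := by
    calc s * d ≤ (a - 1) * d := Nat.mul_le_mul_right d (by omega)
      _ = d * (a - 1) := Nat.mul_comm _ _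
  have hsd_le : s * d ≤ m := by omega
  obtain ⟨k, hk⟩ := (Nat.modEq_iff_dvd' hsd_le).mp h2
  have hm' : m = a * k + s * d := by omega
  -- q < k
  have hqk : q + 1 ≤ k := by
    have hqa : a * q < a * k := by
      have : q * a = a * q := Nat.mul_comm _ _
      omega
    have := Nat.lt_of_mul_lt_mul_left hqa
    omega
  -- a - 1 ≤ (p-1)*(q+1)
  have hdm : (p - 1) * q + (a - 2) % (p - 1) = a - 2 := by
    rw [hq]; exact Nat.div_add_mod _ _
  have hmod : (a - 2) % (p - 1) < p - 1 := Nat.mod_lt _ (by omega)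
  have hexp : (p - 1) * (q + 1) = (p - 1) * q + (p - 1) := by ring
  have ha1 : a - 1 ≤ (p - 1) * (q + 1) := by omega
  have hsk : s ≤ (p - 1) * k := by
    have : (p - 1) * (q + 1) ≤ (p - 1) * k := Nat.mul_le_mul_left _ hqk
    omega
  set q' : ℕ := s / (p - 1) with hq'
  set r' : ℕ := s % (p - 1) with hr'
  have hqr : (p - 1) * q' + r' = s := Nat.div_add_mod s (p - 1)
  have hr'lt : r' < p - 1 := Nat.mod_lt _ (by omega)
  set e : ℕ := if r' = 0 then 0 else 1 with he
  have hecases : (e = 0 ∧ r' = 0) ∨ (e = 1 ∧ r' ≠ 0) := by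
    by_cases h : r' = 0 <;> simp [he, h]
  have hq'e : q' + e ≤ k := by
    rcases hecases with ⟨he0, hr0⟩ | ⟨he1, hr0⟩
    · have hle : (p - 1) * q' ≤ (p - 1) * k := by omega
      have := Nat.le_of_mul_le_mul_left hle (by omega : 0 < p - 1)
      omega
    · have hlt : (p - 1) * q' < (p - 1) * k := by omega
      have := Nat.lt_of_mul_lt_mul_left hlt
      omega
  obtain ⟨k₀, hk₀⟩ := Nat.exists_eq_add_of_le hq'e
  refine ⟨fun i => (if i = 0 then k₀ else 0) + (if i = r' then e else 0) +
    (if i = p - 1 then q' else 0), ?_⟩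
  have h0p : 0 < p := by omega
  have hrp : r' < p := by omega
  have hp1 : p - 1 < p := by omega
  simp only [add_mul, Finset.sum_add_distrib, ite_mul, zero_mul, Finset.sum_ite_eq',
    Finset.mem_range, h0p, hrp, hp1, if_true]
  rw [hm', hk₀, ← hqr]
  rcases hecases with ⟨he0, hr0⟩ | ⟨he1, hr0⟩
  · rw [he0, hr0]; ring
  · rw [he1]; ring
end

section
/- If p consecutive integers n_0, n_0+1, ..., n_0+p-1 with p ≥ n_0 ≥ 1 are available sizes, then for any N' ≥ (f+1)·n_0 with f ≥ 0, there exists a representation N' = Σ x_i·n_i with nonnegative integers x_i such that Σ x_i ≥ f+1. -/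
/-- Strengthened coverage: with consecutive sizes `n0, ..., n0+p-1`, `p ≥ n0 ≥ 1`,
every `N ≥ (f+1)·n0` has a representation `N = ∑ xᵢ·(n0+i)` using at least
`f+1` pipelines. -/
theorem coverage_with_replicas (n0 p f : ℕ) (h1 : 1 ≤ n0) (hp : n0 ≤ p) :
    ∀ N : ℕ, (f + 1) * n0 ≤ N →
      ∃ x : ℕ → ℕ, N = ∑ i ∈ Finset.range p, x i * (n0 + i) ∧
        f + 1 ≤ ∑ i ∈ Finset.range p, x i := by
  intro N hN
  have e4 : (f + 1) * n0 = f * n0 + n0 := by ring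
  set M := N - f * n0 with hM
  have hMn0 : n0 ≤ M := by omega
  set q := M / n0 with hqdef
  set r := M % n0 with hrdef
  have hq : 1 ≤ q := (Nat.one_le_div_iff (by omega)).mpr hMn0
  have hr : r < n0 := Nat.mod_lt _ (by omega)
  have hMd : n0 * q + r = M := Nat.div_add_mod M n0
  have hrp : r < p := by omega
  have h0p : 0 < p := by omega
  have key : ∀ (c j : ℕ), j < p →
      (∑ i ∈ Finset.range p, (if i = j then c else 0) * (n0 + i)) = c * (n0 + j) := by
    intro c j hj
    simp [ite_mul, Finset.sum_ite_eq', hj]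
  refine ⟨fun i => (if i = 0 then f + q - 1 else 0) + (if i = r then 1 else 0), ?_, ?_⟩
  · have hsplit : ∑ i ∈ Finset.range p,
        ((if i = 0 then f + q - 1 else 0) + (if i = r then 1 else 0)) * (n0 + i)
        = (∑ i ∈ Finset.range p, (if i = 0 then f + q - 1 else 0) * (n0 + i))
          + ∑ i ∈ Finset.range p, (if i = r then 1 else 0) * (n0 + i) := by
      rw [← Finset.sum_add_distrib]
      exact Finset.sum_congr rfl fun i _ => add_mul _ _ _
    rw [hsplit, key _ 0 h0p, key _ r hrp]
    have e2 : (f + q) * n0 = (f + q - 1) * n0 + n0 := by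
      have e := Nat.succ_pred_eq_of_pos (show 0 < f + q by omega)
      conv_lhs => rw [← e]
      rw [Nat.succ_mul, Nat.pred_eq_sub_one]
    have e3 : (f + q) * n0 = f * n0 + n0 * q := by ring
    have e5 : (f + q - 1) * (n0 + 0) = (f + q - 1) * n0 := by ring
    omega
  · show f + 1 ≤ ∑ i ∈ Finset.range p,
        ((if i = 0 then f + q - 1 else 0) + (if i = r then 1 else 0))
    have hs : ∑ i ∈ Finset.range p,
        ((if i = 0 then f + q - 1 else 0) + (if i = r then 1 else 0))
        = (f + q - 1) + 1 := by
      rw [Finset.sum_add_distrib]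
      simp [Finset.sum_ite_eq', h0p, hrp]
    rw [hs]; omega
end
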